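/- arXiv:1905.13328 — 4 statements merged into one kernel-verified Lean document; each statement's English description precedes it below -/
import Mathlib

section
/- Let H be a real Hilbert space with dual H*, and let M : H × ℝ → H* × ℝ be the block operator M(v,t) = (Av + t·b, ⟨c,v⟩_H + d·t), where A : H → H* is bounded linear and self-adjoint (⟨Av,w⟩ = ⟨Aw,v⟩ for all v,w), b ∈ H* \ {0}, c ∈ H \ {0}, d ∈ ℝ. If A is an isomorphism from H onto H*, then M is an isomorphism from H × ℝ onto H* × ℝ if and only if d − ⟨c, A⁻¹b⟩_H ≠ 0. -/
open RealInnerProductSpace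

set_option maxHeartbeats 1000000 in
/-- ABCD Lemma, part (i): if `A` is an isomorphism, the block operator
`M(v,t) = (Av + t•b, ⟪c,v⟫ + d t)` is an isomorphism iff `d - ⟪c, A⁻¹ b⟫ ≠ 0`. -/
theorem abcd_lemma_regular
    {H : Type*} [NormedAddCommGroup H] [InnerProductSpace ℝ H] [CompleteSpace H]
    (A : H →L[ℝ] StrongDual ℝ H)
    (hA_sym : ∀ v w : H, A v w = A w v)
    (eA : H ≃L[ℝ] StrongDual ℝ H) (heA : ⇑eA = ⇑A)
    (b : StrongDual ℝ H) (hb : b ≠ 0)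
    (c : H) (hc : c ≠ 0) (d : ℝ)
    (M : (H × ℝ) →L[ℝ] (StrongDual ℝ H × ℝ))
    (hM : ∀ (v : H) (t : ℝ), M (v, t) = (A v + t • b, ⟪c, v⟫ + d * t)) :
    (∃ e : (H × ℝ) ≃L[ℝ] (StrongDual ℝ H × ℝ), ⇑e = ⇑M) ↔
      d - ⟪c, eA.symm b⟫ ≠ 0 := by
  have hAv : ∀ v : H, A v = eA v := fun v => by rw [heA]
  have hAinv : ∀ f : StrongDual ℝ H, A (eA.symm f) = f := fun f => by
    rw [hAv]; exact eA.apply_symm_apply f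
  constructor
  · rintro ⟨e, he⟩ h0
    have h0' : ⟪c, eA.symm b⟫ = d := by linarith
    have hker : M (-(eA.symm b), 1) = 0 := by
      rw [hM]
      have h1 : A (-(eA.symm b)) = -b := by rw [map_neg, hAinv]
      rw [h1]
      rw [Prod.ext_iff]
      constructor
      · simp
      · simp [inner_neg_right, h0']
    have : e (-(eA.symm b), 1) = e 0 := by rw [he, hker, map_zero]
    have h2 : ((-(eA.symm b), 1) : H × ℝ) = 0 := e.injective this
    have : (1 : ℝ) = 0 := congrArg Prod.snd h2
    norm_num at this
  · intro hδ
    have hinj : Function.Injective M := by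
      intro p q hpq
      obtain ⟨v, t⟩ := p; obtain ⟨w, s⟩ := q
      rw [hM, hM, Prod.mk.injEq] at hpq
      obtain ⟨h1, h2⟩ := hpq
      -- A v + t•b = A w + s•b  →  v - w = (s - t) • eA.symm b
      have h1' : A v - A w = s • b - t • b := by
        rw [sub_eq_sub_iff_add_eq_add, h1]; abel
      have hvw : v - w = (s - t) • eA.symm b := by
        apply eA.injective
        rw [map_sub, map_smul, eA.apply_symm_apply, ← hAv, ← hAv, h1']; exact (sub_smul s t b).symm
      have h3 : ⟪c, v - w⟫ = (s - t) * ⟪c, eA.symm b⟫ := by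
        rw [hvw, real_inner_smul_right]
      rw [inner_sub_right] at h3
      have hts : (s - t) * (d - ⟪c, eA.symm b⟫) = 0 := by nlinarith [h3, h2]
      have hts' : s = t := by
        rcases mul_eq_zero.mp hts with h | h
        · linarith [sub_eq_zero.mp h]
        · exact absurd h hδ
      have hvw' : v = w := by
        rw [hts'] at hvw; simp at hvw; exact sub_eq_zero.mp hvw
      rw [hvw', hts']
    have hsurj : Function.Surjective M := by
      rintro ⟨f, s⟩
      set t : ℝ := (s - ⟪c, eA.symm f⟫) / (d - ⟪c, eA.symm b⟫) with ht
      refine ⟨(eA.symm f - t • eA.symm b, t), ?_⟩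
      rw [hM, Prod.mk.injEq]
      constructor
      · rw [map_sub, map_smul, hAinv, hAinv]; abel
      · rw [inner_sub_right, real_inner_smul_right]
        have hmul : t * (d - ⟪c, eA.symm b⟫) = s - ⟪c, eA.symm f⟫ := div_mul_cancel₀ _ hδ
        linarith
    have hbij : Function.Bijective M := ⟨hinj, hsurj⟩
    refine ⟨ContinuousLinearEquiv.ofBijective M ?_ ?_, ?_⟩
    · exact LinearMap.ker_eq_bot.mpr hinj
    · exact LinearMap.range_eq_top.mpr hsurj
    · rfl
end

section
/- Let H be a real Hilbert space and M : H × ℝ → H* × ℝ the block operator M(v,t) = (Av + t·b, (c,v)_H + d·t), with A : H → H* bounded linear self-adjoint such that Ker(A) is one-dimensional spanned by γ ≠ 0 and Range(A) has codimension 1 (A is Fredholm of index 0), b ∈ H*, c ∈ H, d ∈ ℝ. Then M is an isomorphism from H × ℝ onto H* × ℝ if and only if ⟨b, γ⟩ ≠ 0 and (c, γ)_H ≠ 0. -/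
open RealInnerProductSpace

private lemma submodule_eq_of_le_of_quot_finrank_eq
    {V : Type*} [AddCommGroup V] [Module ℝ V]
    {S T : Submodule ℝ V} (h : S ≤ T)
    (hS : Module.finrank ℝ (V ⧸ S) = 1) (hT : Module.finrank ℝ (V ⧸ T) = 1) :
    S = T := by
  have hle : S ≤ T.comap LinearMap.id := h
  let q : (V ⧸ S) →ₗ[ℝ] (V ⧸ T) := Submodule.mapQ S T LinearMap.id hle
  have hq : ∀ x : V, q (Submodule.Quotient.mk x) = Submodule.Quotient.mk x := fun x => rfl
  have hsurj : Function.Surjective q := by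
    intro y
    obtain ⟨x, rfl⟩ := Submodule.Quotient.mk_surjective T y
    exact ⟨Submodule.Quotient.mk x, hq x⟩
  have : FiniteDimensional ℝ (V ⧸ S) := FiniteDimensional.of_finrank_pos (by omega)
  have : FiniteDimensional ℝ (V ⧸ T) := FiniteDimensional.of_finrank_pos (by omega)
  have hinj : Function.Injective q :=
    (LinearMap.injective_iff_surjective_of_finrank_eq_finrank (by rw [hS, hT])).mpr hsurj
  refine le_antisymm h fun x hx => ?_
  have h0 : q (Submodule.Quotient.mk x) = q 0 := by
    rw [map_zero, hq]
    exact (Submodule.Quotient.mk_eq_zero T).mpr hx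
  exact (Submodule.Quotient.mk_eq_zero S).mp (hinj h0)

/-- ABCD Lemma, part (ii): if `A` is self-adjoint with one-dimensional kernel
spanned by `γ ≠ 0` and closed range of codimension one (Fredholm of index 0),
then the block operator `M(v,t) = (Av + t•b, ⟪c,v⟫ + d t)` is an isomorphism
iff `⟨b, γ⟩ ≠ 0` and `⟪c, γ⟫ ≠ 0`. -/
theorem abcd_lemma_fold
    {H : Type*} [NormedAddCommGroup H] [InnerProductSpace ℝ H] [CompleteSpace H]
    (A : H →L[ℝ] StrongDual ℝ H)
    (hA_sym : ∀ v w : H, A v w = A w v)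
    (γ : H) (hγ : γ ≠ 0)
    (hker : LinearMap.ker (A : H →ₗ[ℝ] StrongDual ℝ H) = Submodule.span ℝ {γ})
    (hrange_closed : IsClosed (LinearMap.range (A : H →ₗ[ℝ] StrongDual ℝ H) : Set (StrongDual ℝ H)))
    (hcodim : Module.finrank ℝ (StrongDual ℝ H ⧸ LinearMap.range (A : H →ₗ[ℝ] StrongDual ℝ H)) = 1)
    (b : StrongDual ℝ H) (c : H) (d : ℝ)
    (M : (H × ℝ) →L[ℝ] (StrongDual ℝ H × ℝ))
    (hM : ∀ (v : H) (t : ℝ), M (v, t) = (A v + t • b, ⟪c, v⟫ + d * t)) :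
    (∃ e : (H × ℝ) ≃L[ℝ] (StrongDual ℝ H × ℝ), ⇑e = ⇑M) ↔
      (b γ ≠ 0 ∧ ⟪c, γ⟫ ≠ 0) := by
  have hγγ : (⟪γ, γ⟫ : ℝ) ≠ 0 := fun h => hγ (inner_self_eq_zero.mp h)
  have hγA : A γ = 0 := by
    have : γ ∈ LinearMap.ker (A : H →ₗ[ℝ] StrongDual ℝ H) := hker ▸ Submodule.mem_span_singleton_self γ
    exact this
  have hAvγ : ∀ v : H, A v γ = 0 := fun v => by
    rw [hA_sym v γ, hγA]; rfl
  constructor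
  · rintro ⟨e, he⟩
    constructor
    · intro hb0
      obtain ⟨x, hx⟩ := e.surjective (innerSL ℝ γ, 0)
      rw [he] at hx
      obtain ⟨v, t⟩ := x
      rw [hM] at hx
      have h1 : A v + t • b = innerSL ℝ γ := congrArg Prod.fst hx
      have := congrArg (fun f : StrongDual ℝ H => f γ) h1
      simp only [ContinuousLinearMap.add_apply, ContinuousLinearMap.smul_apply,
        hAvγ, hb0, smul_eq_mul, mul_zero, add_zero, zero_add, innerSL_apply_apply] at this
      exact hγγ this.symm
    · intro hc0
      have hMγ : M (γ, 0) = M (0, 0) := by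
        rw [hM, hM, hγA, hc0]
        simp
      have := e.injective (by simp only [he]; exact hMγ)
      exact hγ (congrArg Prod.fst this)
  · rintro ⟨hb, hc⟩
    -- range A = ker (eval at γ)
    let φ : StrongDual ℝ H →ₗ[ℝ] ℝ :=
      { toFun := fun f => f γ
        map_add' := fun f g => rfl
        map_smul' := fun r f => rfl }
    have hφsurj : Function.Surjective φ := by
      intro r
      refine ⟨(r / ⟪γ, γ⟫) • innerSL ℝ γ, ?_⟩
      show ((r / ⟪γ, γ⟫) • innerSL ℝ γ) γ = r
      rw [ContinuousLinearMap.smul_apply, innerSL_apply_apply, smul_eq_mul]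
      field_simp
    have hTfin : Module.finrank ℝ (StrongDual ℝ H ⧸ LinearMap.ker φ) = 1 := by
      rw [(φ.quotKerEquivOfSurjective hφsurj).finrank_eq]
      exact Module.finrank_self ℝ
    have hle : LinearMap.range (A : H →ₗ[ℝ] StrongDual ℝ H) ≤ LinearMap.ker φ := by
      rintro f ⟨v, rfl⟩
      exact hAvγ v
    have hrange : LinearMap.range (A : H →ₗ[ℝ] StrongDual ℝ H) = LinearMap.ker φ :=
      submodule_eq_of_le_of_quot_finrank_eq hle hcodim hTfin
    -- injectivity of M
    have hinj : LinearMap.ker (M : (H × ℝ) →ₗ[ℝ] (StrongDual ℝ H × ℝ)) = ⊥ := by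
      rw [LinearMap.ker_eq_bot']
      rintro ⟨v, t⟩ hx
      rw [ContinuousLinearMap.coe_coe, hM] at hx
      have h1 : A v + t • b = 0 := congrArg Prod.fst hx
      have h2 : ⟪c, v⟫ + d * t = 0 := congrArg Prod.snd hx
      have ht : t = 0 := by
        have := congrArg (fun f : StrongDual ℝ H => f γ) h1
        simp only [ContinuousLinearMap.add_apply, ContinuousLinearMap.smul_apply,
          hAvγ, smul_eq_mul, zero_add, ContinuousLinearMap.zero_apply] at this
        rcases mul_eq_zero.mp this with h | h
        · exact h
        · exact absurd h hb
      subst ht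
      rw [zero_smul, add_zero] at h1
      have hv : v ∈ Submodule.span ℝ {γ} := by
        rw [← hker]
        exact h1
      obtain ⟨s, rfl⟩ := Submodule.mem_span_singleton.mp hv
      rw [mul_zero, add_zero, real_inner_smul_right] at h2
      rcases mul_eq_zero.mp h2 with h | h
      · simp [h]
      · exact absurd h hc
    -- surjectivity
    have hsurj : LinearMap.range (M : (H × ℝ) →ₗ[ℝ] (StrongDual ℝ H × ℝ)) = ⊤ := by
      rw [LinearMap.range_eq_top]
      rintro ⟨f, r⟩
      set t : ℝ := f γ / b γ with ht
      have hmem : f - t • b ∈ LinearMap.range (A : H →ₗ[ℝ] StrongDual ℝ H) := by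
        rw [hrange]
        show (f - t • b) γ = 0
        rw [ContinuousLinearMap.sub_apply, ContinuousLinearMap.smul_apply, smul_eq_mul, ht]
        field_simp
        ring
      obtain ⟨u, hu⟩ := hmem
      set s : ℝ := (r - d * t - ⟪c, u⟫) / ⟪c, γ⟫ with hs
      refine ⟨(u + s • γ, t), ?_⟩
      rw [ContinuousLinearMap.coe_coe, hM]
      refine Prod.ext ?_ ?_
      · show A (u + s • γ) + t • b = f
        rw [map_add, map_smul, hγA, smul_zero, add_zero, show A u = f - t • b from hu]
        abel
      · show ⟪c, u + s • γ⟫ + d * t = r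
        rw [inner_add_right, real_inner_smul_right, hs]
        field_simp
        ring
    exact ⟨ContinuousLinearEquiv.ofBijective M hinj hsurj, rfl⟩
end

section
/- Let H be a real Hilbert space, A : H → H* bounded linear and self-adjoint, J : H → H* the Riesz isomorphism, and suppose there exist μ < 0 and γ ∈ H with ‖γ‖ = 1 such that Aγ = μJγ, and a constant c > 0 such that ⟨Aw, w⟩ ≥ c‖w‖² for all w in the orthogonal complement U = {w : (w,γ)_H = 0}. Then A is an isomorphism from H onto H*, and moreover ‖Av‖_{H*} ≥ (1/2)·min(|μ|, c)·‖v‖ for all v ∈ H. -/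
open RealInnerProductSpace

lemma iso_aux {H : Type*} [NormedAddCommGroup H] [InnerProductSpace ℝ H] [CompleteSpace H]
    (A : H →L[ℝ] StrongDual ℝ H)
    (hA_sym : ∀ v w : H, A v w = A w v)
    (k : ℝ) (hk : 0 < k) (hbd : ∀ v, k * ‖v‖ ≤ ‖A v‖) :
    ∃ e : H ≃L[ℝ] StrongDual ℝ H, ⇑e = ⇑A := by
  set J := InnerProductSpace.toDual ℝ H with hJ
  set T : H →L[ℝ] H := J.symm.toLinearIsometry.toContinuousLinearMap.comp A with hT
  have hTapp : ∀ v, T v = J.symm (A v) := fun v => rfl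
  have hTin : ∀ v w, ⟪T v, w⟫ = A v w := fun v w => InnerProductSpace.toDual_symm_apply
  have hTnorm : ∀ v, ‖T v‖ = ‖A v‖ := fun v => J.symm.norm_map (A v)
  have hTbd : ∀ v, k * ‖v‖ ≤ ‖T v‖ := fun v => (hTnorm v) ▸ hbd v
  have hinj : ∀ v, T v = 0 → v = 0 := by
    intro v hv
    have := hTbd v
    rw [hv, norm_zero] at this
    have h0 : ‖v‖ ≤ 0 := by nlinarith [norm_nonneg v]
    simpa using le_antisymm h0 (norm_nonneg v)
  have hanti : AntilipschitzWith (⟨k, hk.le⟩ : NNReal)⁻¹ T := by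
    apply ContinuousLinearMap.antilipschitz_of_bound
    intro x
    change ‖x‖ ≤ k⁻¹ * ‖T x‖; rw [le_inv_mul_iff₀ hk]
    exact hTbd x
  have hclosed : IsClosed (Set.range T) := hanti.isClosed_range T.uniformContinuous
  have hrange : LinearMap.range (T : H →ₗ[ℝ] H) = ⊤ := by
    have hco : (LinearMap.range (T : H →ₗ[ℝ] H) : Submodule ℝ H).topologicalClosure = LinearMap.range (T : H →ₗ[ℝ] H) := by
      exact IsClosed.submodule_topologicalClosure_eq hclosed
    rw [← hco]
    rw [← Submodule.orthogonal_orthogonal_eq_closure]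
    have hbot : (LinearMap.range (T : H →ₗ[ℝ] H))ᗮ = ⊥ := by
      rw [Submodule.eq_bot_iff]
      intro x hx
      apply hinj
      rw [← inner_self_eq_zero (𝕜 := ℝ) (x := T x)]
      have h1 : ⟪T (T x), x⟫ = 0 := hx (T (T x)) ⟨T x, rfl⟩
      have h2 : ⟪T (T x), x⟫ = ⟪T x, T x⟫ := by
        rw [hTin, hA_sym, ← hTin, real_inner_comm]
      rw [← h2, h1]
    rw [hbot, Submodule.bot_orthogonal_eq_top]
  have hkerA : LinearMap.ker (A : H →ₗ[ℝ] StrongDual ℝ H) = ⊥ := by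
    rw [LinearMap.ker_eq_bot']
    intro v hv
    apply hinj v
    rw [hTapp, show A v = 0 from hv]
    simp
  have hrangeA : LinearMap.range (A : H →ₗ[ℝ] StrongDual ℝ H) = ⊤ := by
    rw [LinearMap.range_eq_top]
    intro f
    obtain ⟨v, hv⟩ := LinearMap.range_eq_top.mp hrange (J.symm f)
    exact ⟨v, by show A v = f; rw [show A v = J (T v) from (J.apply_symm_apply (A v)).symm, show T v = J.symm f from hv,
      J.apply_symm_apply]⟩
  exact ⟨ContinuousLinearEquiv.ofBijective A hkerA hrangeA, rfl⟩



lemma est_aux {H : Type*} [NormedAddCommGroup H] [InnerProductSpace ℝ H] [CompleteSpace H]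
    (A : H →L[ℝ] StrongDual ℝ H)
    (hA_sym : ∀ v w : H, A v w = A w v)
    (μ : ℝ) (γ : H) (hγ : ‖γ‖ = 1)
    (heig : A γ = μ • (InnerProductSpace.toDual ℝ H γ))
    (c : ℝ) (hc : 0 < c)
    (hcoer : ∀ w : H, ⟪w, γ⟫ = 0 → c * ‖w‖ ^ 2 ≤ A w w)
    (v : H) : (1 / 2) * min |μ| c * ‖v‖ ≤ ‖A v‖ := by
  set α := ⟪v, γ⟫ with hα
  set w := v - α • γ with hw
  have hγγ : ⟪γ, γ⟫ = 1 := by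
    rw [real_inner_self_eq_norm_sq, hγ]; norm_num
  have hwγ : ⟪w, γ⟫ = 0 := by
    rw [hw, inner_sub_left, real_inner_smul_left, hγγ]; ring
  have hAγ : ∀ u : H, A γ u = μ * ⟪γ, u⟫ := by
    intro u
    rw [heig]
    simp [InnerProductSpace.toDual_apply_apply]
  have hb1 : |μ| * |α| ≤ ‖A v‖ := by
    have h1 : A v γ = μ * α := by
      rw [hA_sym, hAγ, real_inner_comm]
    have h2 : |A v γ| ≤ ‖A v‖ * ‖γ‖ := (A v).le_opNorm γ
    rw [h1, abs_mul, hγ, mul_one] at h2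
    exact h2
  have hAw : A v w = A w w := by
    have hv : v = α • γ + w := by rw [hw]; abel
    rw [hA_sym]
    have hrw : (A w) v = (A w) (α • γ + w) := by rw [← hv]
    rw [hrw, map_add, map_smul]
    have : A w γ = 0 := by rw [hA_sym, hAγ, real_inner_comm, hwγ, mul_zero]
    simp [this]
  have hb2 : c * ‖w‖ ≤ ‖A v‖ := by
    rcases eq_or_lt_of_le (norm_nonneg w) with h0 | h0
    · rw [← h0, mul_zero]; exact norm_nonneg _
    · have h1 : c * ‖w‖ ^ 2 ≤ A v w := hAw ▸ hcoer w hwγ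
      have h2 : A v w ≤ |A v w| := le_abs_self _
      have h3 : |A v w| ≤ ‖A v‖ * ‖w‖ := (A v).le_opNorm w
      have := h1.trans (h2.trans h3)
      nlinarith
  have hvle : ‖v‖ ≤ |α| + ‖w‖ := by
    have hv : v = α • γ + w := by rw [hw]; abel
    calc ‖v‖ = ‖α • γ + w‖ := by rw [← hv]
    _ ≤ ‖α • γ‖ + ‖w‖ := norm_add_le _ _
    _ = |α| + ‖w‖ := by rw [norm_smul, Real.norm_eq_abs, hγ, mul_one]
  have hm1 : min |μ| c * |α| ≤ |μ| * |α| :=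
    mul_le_mul_of_nonneg_right (min_le_left _ _) (abs_nonneg _)
  have hm2 : min |μ| c * ‖w‖ ≤ c * ‖w‖ :=
    mul_le_mul_of_nonneg_right (min_le_right _ _) (norm_nonneg _)
  have hmin : 0 ≤ min |μ| c := le_min (abs_nonneg _) hc.le
  nlinarith [mul_le_mul_of_nonneg_left hvle hmin]


/-- Stability estimate on an unstable segment: if `A` is self-adjoint with a
negative eigenvalue `μ` (eigenvector `γ`, via the Riesz map `J`) and is
coercive with constant `c` on the orthogonal complement of `γ`, then `A` is an
isomorphism and `‖Av‖ ≥ (1/2) min(|μ|,c) ‖v‖` for all `v`. -/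
theorem isomorphism_on_unstable_segment
    {H : Type*} [NormedAddCommGroup H] [InnerProductSpace ℝ H] [CompleteSpace H]
    (A : H →L[ℝ] StrongDual ℝ H)
    (hA_sym : ∀ v w : H, A v w = A w v)
    (μ : ℝ) (hμ : μ < 0) (γ : H) (hγ : ‖γ‖ = 1)
    (heig : A γ = μ • (InnerProductSpace.toDual ℝ H γ))
    (c : ℝ) (hc : 0 < c)
    (hcoer : ∀ w : H, ⟪w, γ⟫ = 0 → c * ‖w‖ ^ 2 ≤ A w w) :
    (∃ e : H ≃L[ℝ] StrongDual ℝ H, ⇑e = ⇑A) ∧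
      ∀ v : H, (1 / 2) * min |μ| c * ‖v‖ ≤ ‖A v‖ := by
  have hest := est_aux A hA_sym μ γ hγ heig c hc hcoer
  have hk : 0 < (1 / 2) * min |μ| c :=
    mul_pos (by norm_num) (lt_min (abs_pos.mpr hμ.ne) hc)
  exact ⟨iso_aux A hA_sym _ hk hest, hest⟩
end

section
/- (Discrete log-Sobolev-type bound on the crack faces, in the homogeneous case.) Let v : ℤ² → ℝ with v(0) = 0 and ‖Dv‖_{ℓ²} < ∞, where Dv(m) = (v(m+e₁)−v(m), v(m+e₂)−v(m)). Then there is a universal constant C such that |v(l)| ≤ C·‖Dv‖_{ℓ²}·(1 + log|l|) for all l ∈ ℤ² \ {0}. -/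
open Finset

namespace DiscLog

variable (v : ℤ × ℤ → ℝ)

/-- The energy density. -/
def D (m : ℤ × ℤ) : ℝ :=
  (v (m + (1, 0)) - v m) ^ 2 + (v (m + (0, 1)) - v m) ^ 2

lemma D_nonneg (m : ℤ × ℤ) : 0 ≤ D v m := by unfold D; positivity

lemma hsq_le (x y : ℤ) : (v (x + 1, y) - v (x, y)) ^ 2 ≤ D v (x, y) := by
  have : ((x, y) : ℤ × ℤ) + (1, 0) = (x + 1, y) := by simp [Prod.ext_iff]
  unfold D
  rw [this]
  nlinarith [sq_nonneg (v ((x, y) + (0, 1)) - v (x, y))]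

lemma vsq_le (x y : ℤ) : (v (x, y + 1) - v (x, y)) ^ 2 ≤ D v (x, y) := by
  have : ((x, y) : ℤ × ℤ) + (0, 1) = (x, y + 1) := by simp [Prod.ext_iff]
  unfold D
  rw [this]
  nlinarith [sq_nonneg (v ((x, y) + (1, 0)) - v (x, y))]

lemma tele_h (x y : ℤ) (n : ℕ) :
    v (x + n, y) - v (x, y) = ∑ i ∈ range n, (v (x + i + 1, y) - v (x + i, y)) := by
  have h := Finset.sum_range_sub (f := fun i : ℕ => v (x + i, y)) n
  simp only [Nat.cast_zero, add_zero, Nat.cast_add, Nat.cast_one, ← add_assoc] at h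
  rw [← h]

lemma tele_v (x y : ℤ) (n : ℕ) :
    v (x, y + n) - v (x, y) = ∑ i ∈ range n, (v (x, y + i + 1) - v (x, y + i)) := by
  have h := Finset.sum_range_sub (f := fun i : ℕ => v (x, y + i)) n
  simp only [Nat.cast_zero, add_zero, Nat.cast_add, Nat.cast_one, ← add_assoc] at h
  rw [← h]

lemma sq_cs (n : ℕ) (f : ℕ → ℝ) :
    (∑ i ∈ range n, f i) ^ 2 ≤ n * ∑ i ∈ range n, f i ^ 2 := by
  have := sq_sum_le_card_mul_sum_sq (s := range n) (f := f)
  simpa using this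

lemma sq_row (x y : ℤ) {i k M : ℕ} (hi : i < M) (hk : k < M) :
    (v (x + k, y) - v (x + i, y)) ^ 2
      ≤ M * ∑ t ∈ range M, (v (x + t + 1, y) - v (x + t, y)) ^ 2 := by
  -- reduce to the case i ≤ k
  have key : ∀ i k : ℕ, i ≤ k → k < M →
      (v (x + k, y) - v (x + i, y)) ^ 2
        ≤ M * ∑ t ∈ range M, (v (x + t + 1, y) - v (x + t, y)) ^ 2 := by
    intro i k hik hkM
    have hxk : (x + k : ℤ) = (x + i) + (k - i : ℕ) := by
      have : ((k - i : ℕ) : ℤ) = (k : ℤ) - i := by omega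
      rw [this]; ring
    rw [hxk, tele_h v (x + i) y (k - i)]
    calc (∑ t ∈ range (k - i), (v (x + i + t + 1, y) - v (x + i + t, y))) ^ 2
        ≤ (k - i : ℕ) * ∑ t ∈ range (k - i), (v (x + i + t + 1, y) - v (x + i + t, y)) ^ 2 :=
          sq_cs _ _
      _ ≤ M * ∑ t ∈ range M, (v (x + t + 1, y) - v (x + t, y)) ^ 2 := by
          apply mul_le_mul
          · exact Nat.cast_le.2 (by omega)
          · have hre : ∑ t ∈ range (k - i), (v (x + i + t + 1, y) - v (x + i + t, y)) ^ 2
                = ∑ t ∈ Finset.Ico i k, (v (x + t + 1, y) - v (x + t, y)) ^ 2 := by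
              rw [Finset.sum_Ico_eq_sum_range]
              apply Finset.sum_congr rfl
              intro t _
              push_cast
              ring_nf
            rw [hre]
            apply Finset.sum_le_sum_of_subset_of_nonneg
            · intro t ht
              simp only [Finset.mem_Ico] at ht
              simp only [Finset.mem_range]
              omega
            · intro t _ _; positivity
          · positivity
          · positivity
  rcases le_or_gt i k with h | h
  · exact key i k h hk
  · have := key k i h.le hi
    calc (v (x + k, y) - v (x + i, y)) ^ 2 = (v (x + i, y) - v (x + k, y)) ^ 2 := by ring
      _ ≤ _ := this

lemma sq_col (x y : ℤ) {j l M : ℕ} (hj : j < M) (hl : l < M) :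
    (v (x, y + l) - v (x, y + j)) ^ 2
      ≤ M * ∑ t ∈ range M, (v (x, y + t + 1) - v (x, y + t)) ^ 2 := by
  have key : ∀ j l : ℕ, j ≤ l → l < M →
      (v (x, y + l) - v (x, y + j)) ^ 2
        ≤ M * ∑ t ∈ range M, (v (x, y + t + 1) - v (x, y + t)) ^ 2 := by
    intro j l hjl hlM
    have hyl : (y + l : ℤ) = (y + j) + (l - j : ℕ) := by
      have : ((l - j : ℕ) : ℤ) = (l : ℤ) - j := by omega
      rw [this]; ring
    rw [hyl, tele_v v x (y + j) (l - j)]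
    calc (∑ t ∈ range (l - j), (v (x, y + j + t + 1) - v (x, y + j + t))) ^ 2
        ≤ (l - j : ℕ) * ∑ t ∈ range (l - j), (v (x, y + j + t + 1) - v (x, y + j + t)) ^ 2 :=
          sq_cs _ _
      _ ≤ M * ∑ t ∈ range M, (v (x, y + t + 1) - v (x, y + t)) ^ 2 := by
          apply mul_le_mul
          · exact Nat.cast_le.2 (by omega)
          · have hre : ∑ t ∈ range (l - j), (v (x, y + j + t + 1) - v (x, y + j + t)) ^ 2
                = ∑ t ∈ Finset.Ico j l, (v (x, y + t + 1) - v (x, y + t)) ^ 2 := by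
              rw [Finset.sum_Ico_eq_sum_range]
              apply Finset.sum_congr rfl
              intro t _
              push_cast
              ring_nf
            rw [hre]
            apply Finset.sum_le_sum_of_subset_of_nonneg
            · intro t ht
              simp only [Finset.mem_Ico] at ht
              simp only [Finset.mem_range]
              omega
            · intro t _ _; positivity
          · positivity
          · positivity
  rcases le_or_gt j l with h | h
  · exact key j l h hl
  · have := key l j h.le hj
    calc (v (x, y + l) - v (x, y + j)) ^ 2 = (v (x, y + j) - v (x, y + l)) ^ 2 := by ring
      _ ≤ _ := this

lemma sq_pair (x y : ℤ) {i j k l M : ℕ} (hi : i < M) (hj : j < M) (hk : k < M) (hl : l < M) :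
    (v (x + i, y + j) - v (x + k, y + l)) ^ 2
      ≤ 2 * M * (∑ t ∈ range M, D v (x + t, y + j))
        + 2 * M * (∑ t ∈ range M, D v (x + k, y + t)) := by
  have hH : (v (x + i, y + j) - v (x + k, y + j)) ^ 2
      ≤ M * ∑ t ∈ range M, D v (x + t, y + j) := by
    calc (v (x + i, y + j) - v (x + k, y + j)) ^ 2
        = (v (x + k, y + j) - v (x + i, y + j)) ^ 2 := by ring
      _ ≤ M * ∑ t ∈ range M, (v (x + t + 1, y + j) - v (x + t, y + j)) ^ 2 :=
          sq_row v x (y + j) hi hk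
      _ ≤ M * ∑ t ∈ range M, D v (x + t, y + j) := by
          apply mul_le_mul_of_nonneg_left _ (by positivity)
          exact Finset.sum_le_sum fun t _ => hsq_le v (x + t) (y + j)
  have hV : (v (x + k, y + j) - v (x + k, y + l)) ^ 2
      ≤ M * ∑ t ∈ range M, D v (x + k, y + t) := by
    calc (v (x + k, y + j) - v (x + k, y + l)) ^ 2
        = (v (x + k, y + l) - v (x + k, y + j)) ^ 2 := by ring
      _ ≤ M * ∑ t ∈ range M, (v (x + k, y + t + 1) - v (x + k, y + t)) ^ 2 :=
          sq_col v (x + k) y hj hl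
      _ ≤ M * ∑ t ∈ range M, D v (x + k, y + t) := by
          apply mul_le_mul_of_nonneg_left _ (by positivity)
          exact Finset.sum_le_sum fun t _ => vsq_le v (x + k) (y + t)
  nlinarith [sq_nonneg ((v (x + i, y + j) - v (x + k, y + j)) - (v (x + k, y + j) - v (x + k, y + l)))]

/-- The key pair-sum estimate over a square of side `M`. -/
lemma sq_pairsum (x y : ℤ) (M : ℕ) :
    ∑ p ∈ range M ×ˢ range M, ∑ q ∈ range M ×ˢ range M,
        (v (x + p.1, y + p.2) - v (x + q.1, y + q.2)) ^ 2
      ≤ 4 * (M : ℝ) ^ 4 * ∑ p ∈ range M ×ˢ range M, D v (x + p.1, y + p.2) := by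
  have step1 : ∑ p ∈ range M ×ˢ range M, ∑ q ∈ range M ×ˢ range M,
        (v (x + p.1, y + p.2) - v (x + q.1, y + q.2)) ^ 2
      ≤ ∑ p ∈ range M ×ˢ range M, ∑ q ∈ range M ×ˢ range M,
        (2 * M * (∑ t ∈ range M, D v (x + t, y + p.2))
          + 2 * M * (∑ t ∈ range M, D v (x + q.1, y + t))) := by
    apply Finset.sum_le_sum
    intro p hp
    apply Finset.sum_le_sum
    intro q hq
    simp only [Finset.mem_product, Finset.mem_range] at hp hq
    exact sq_pair v x y hp.1 hp.2 hq.1 hq.2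
  refine step1.trans ?_
  have card_sq : ((range M ×ˢ range M).card : ℝ) = (M : ℝ) ^ 2 := by
    simp [Finset.card_product, sq]
  -- split the double sum
  rw [show (∑ p ∈ range M ×ˢ range M, ∑ q ∈ range M ×ˢ range M,
        (2 * M * (∑ t ∈ range M, D v (x + t, y + p.2))
          + 2 * M * (∑ t ∈ range M, D v (x + q.1, y + t))))
      = (∑ p ∈ range M ×ˢ range M, ∑ q ∈ range M ×ˢ range M,
          2 * M * (∑ t ∈ range M, D v (x + t, y + p.2)))
        + (∑ p ∈ range M ×ˢ range M, ∑ q ∈ range M ×ˢ range M,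
          2 * M * (∑ t ∈ range M, D v (x + q.1, y + t))) from by
    rw [← Finset.sum_add_distrib]
    exact Finset.sum_congr rfl fun p _ => Finset.sum_add_distrib]
  have hA : (∑ p ∈ range M ×ˢ range M, ∑ q ∈ range M ×ˢ range M,
        2 * (M : ℝ) * (∑ t ∈ range M, D v (x + t, y + p.2)))
      = 2 * (M : ℝ) ^ 4 * ∑ p ∈ range M ×ˢ range M, D v (x + p.1, y + p.2) := by
    have swap : ∑ p ∈ range M ×ˢ range M, D v (x + p.1, y + p.2)
        = ∑ j ∈ range M, ∑ t ∈ range M, D v (x + t, y + j) := by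
      rw [Finset.sum_product]; exact Finset.sum_comm
    rw [swap]
    simp only [Finset.sum_const, Finset.card_product, Finset.card_range, nsmul_eq_mul,
      Finset.sum_product]
    conv_rhs => rw [Finset.mul_sum]
    conv_lhs => rw [Finset.mul_sum]
    apply Finset.sum_congr rfl
    intro j _
    push_cast
    ring
  have hB : (∑ p ∈ range M ×ˢ range M, ∑ q ∈ range M ×ˢ range M,
        2 * (M : ℝ) * (∑ t ∈ range M, D v (x + q.1, y + t)))
      = 2 * (M : ℝ) ^ 4 * ∑ p ∈ range M ×ˢ range M, D v (x + p.1, y + p.2) := by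
    rw [Finset.sum_comm]
    simp only [Finset.sum_const, Finset.card_product, Finset.card_range, nsmul_eq_mul,
      Finset.sum_product]
    conv_rhs => rw [Finset.mul_sum]
    apply Finset.sum_congr rfl
    intro i _
    push_cast
    ring
  rw [hA, hB]
  exact le_of_eq (by ring)

/-- The grid energy is at most the total energy. -/
lemma grid_le (x y : ℤ) (M : ℕ) {E : ℝ}
    (hE : ∀ s : Finset (ℤ × ℤ), ∑ m ∈ s, D v m ≤ E) :
    ∑ p ∈ range M ×ˢ range M, D v (x + p.1, y + p.2) ≤ E := by
  have hinj : Set.InjOn (fun p : ℕ × ℕ => ((x + p.1, y + p.2) : ℤ × ℤ))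
      ↑(range M ×ˢ range M) := by
    intro p _ q _ h
    simp only [Prod.ext_iff] at h
    have : (p.1 : ℤ) = q.1 ∧ (p.2 : ℤ) = q.2 := ⟨by linarith [h.1], by linarith [h.2]⟩
    exact Prod.ext (by exact_mod_cast this.1) (by exact_mod_cast this.2)
  rw [← Finset.sum_image (f := D v) (g := fun p : ℕ × ℕ => ((x + p.1, y + p.2) : ℤ × ℤ))
    (by intro a ha b hb h; exact hinj ha hb h)]
  exact hE _

/-- Shift of a nonnegative grid sum into a larger square. -/
lemma shift_sum_le (F : ℕ × ℕ → ℝ) (hF : ∀ q, 0 ≤ F q) (a b N M : ℕ)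
    (h1 : a + N ≤ M) (h2 : b + N ≤ M) :
    ∑ q ∈ range N ×ˢ range N, F (a + q.1, b + q.2)
      ≤ ∑ q ∈ range M ×ˢ range M, F q := by
  have hinj : ∀ p ∈ range N ×ˢ range N, ∀ q ∈ range N ×ˢ range N,
      (fun p : ℕ × ℕ => (a + p.1, b + p.2)) p = (fun p : ℕ × ℕ => (a + p.1, b + p.2)) q
      → p = q := by
    intro p _ q _ h
    simp only [Prod.ext_iff] at h ⊢
    omega
  rw [← Finset.sum_image (f := F) hinj]
  apply Finset.sum_le_sum_of_subset_of_nonneg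
  · intro q hq
    simp only [Finset.mem_image, Finset.mem_product, Finset.mem_range] at hq ⊢
    obtain ⟨p, hp, rfl⟩ := hq
    omega
  · intro q _ _
    exact hF q

/-- Sum of `v` over a square with corner `c` and side `N`. -/
noncomputable def Sm (c : ℤ × ℤ) (N : ℕ) : ℝ :=
  ∑ p ∈ range N ×ˢ range N, v (c.1 + p.1, c.2 + p.2)

/-- Average of `v` over a square with corner `c` and side `N`. -/
noncomputable def Av (c : ℤ × ℤ) (N : ℕ) : ℝ := Sm v c N / (N : ℝ) ^ 2

lemma Av_one (c : ℤ × ℤ) : Av v c 1 = v c := by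
  simp [Av, Sm]

/-- Main averaged estimate: difference of averages over two squares inside a common
square of side `M`. -/
lemma av_diff {E : ℝ} (hE : ∀ s : Finset (ℤ × ℤ), ∑ m ∈ s, D v m ≤ E) (hE0 : 0 ≤ E)
    (e : ℤ × ℤ) (a b a' b' N1 N2 M : ℕ)
    (hN1 : 0 < N1) (hN2 : 0 < N2)
    (h1 : a + N1 ≤ M) (h2 : b + N1 ≤ M) (h3 : a' + N2 ≤ M) (h4 : b' + N2 ≤ M) :
    |Av v (e.1 + a, e.2 + b) N1 - Av v (e.1 + a', e.2 + b') N2|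
      ≤ 2 * (M : ℝ) ^ 2 / ((N1 : ℝ) * N2) * Real.sqrt E := by
  classical
  set A := range N1 ×ˢ range N1 with hAdef
  set B := range N2 ×ˢ range N2 with hBdef
  set f : ℕ × ℕ → ℝ := fun p => v (e.1 + a + p.1, e.2 + b + p.2) with hfdef
  set g : ℕ × ℕ → ℝ := fun q => v (e.1 + a' + q.1, e.2 + b' + q.2) with hgdef
  set T : ℝ := ∑ p ∈ A, ∑ q ∈ B, (f p - g q) with hTdef
  have hT : T = (N2 : ℝ) ^ 2 * Sm v (e.1 + a, e.2 + b) N1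
      - (N1 : ℝ) ^ 2 * Sm v (e.1 + a', e.2 + b') N2 := by
    rw [hTdef]
    simp only [hAdef, hBdef, Finset.sum_sub_distrib, Finset.sum_const, Finset.card_product,
      Finset.card_range, nsmul_eq_mul, Sm, hfdef, hgdef]
    rw [← Finset.mul_sum]
    push_cast
    ring
  -- Cauchy-Schwarz
  have hCS : T ^ 2 ≤ ((N1 : ℝ) ^ 2 * (N2 : ℝ) ^ 2) * ∑ p ∈ A, ∑ q ∈ B, (f p - g q) ^ 2 := by
    have h := sq_sum_le_card_mul_sum_sq (s := A ×ˢ B) (f := fun pq => f pq.1 - g pq.2)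
    rw [hTdef]
    have hsum : ∑ pq ∈ A ×ˢ B, (f pq.1 - g pq.2) = ∑ p ∈ A, ∑ q ∈ B, (f p - g q) := by
      rw [Finset.sum_product]
    have hsum2 : ∑ pq ∈ A ×ˢ B, (f pq.1 - g pq.2) ^ 2
        = ∑ p ∈ A, ∑ q ∈ B, (f p - g q) ^ 2 := by rw [Finset.sum_product]
    rw [hsum, hsum2] at h
    refine h.trans ?_
    apply mul_le_mul_of_nonneg_right _ ?_
    · apply le_of_eq
      simp [hAdef, hBdef, Finset.card_product]
      push_cast
      ring
    · apply Finset.sum_nonneg; intro p _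
      apply Finset.sum_nonneg; intro q _
      positivity
  -- bound the pair sum by the big-square pair sum
  have hsub : ∑ p ∈ A, ∑ q ∈ B, (f p - g q) ^ 2 ≤ 4 * (M : ℝ) ^ 4 * E := by
    have hstep1 : ∀ p : ℕ × ℕ, ∑ q ∈ B, (f p - g q) ^ 2
        ≤ ∑ q ∈ range M ×ˢ range M, (f p - v (e.1 + q.1, e.2 + q.2)) ^ 2 := by
      intro p
      have h := shift_sum_le (F := fun q : ℕ × ℕ => (f p - v (e.1 + q.1, e.2 + q.2)) ^ 2)
        (by intro q; positivity) a' b' N2 M h3 h4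
      refine le_trans (le_of_eq ?_) h
      apply Finset.sum_congr rfl
      intro q _
      have : g q = v (e.1 + ((a' + q.1 : ℕ) : ℤ), e.2 + ((b' + q.2 : ℕ) : ℤ)) := by
        rw [hgdef]; push_cast; ring_nf
      rw [this]
    have hstep2 : ∑ p ∈ A, ∑ q ∈ range M ×ˢ range M,
          (f p - v (e.1 + q.1, e.2 + q.2)) ^ 2
        ≤ ∑ p ∈ range M ×ˢ range M, ∑ q ∈ range M ×ˢ range M,
          (v (e.1 + p.1, e.2 + p.2) - v (e.1 + q.1, e.2 + q.2)) ^ 2 := by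
      have h := shift_sum_le
        (F := fun p : ℕ × ℕ => ∑ q ∈ range M ×ˢ range M,
          (v (e.1 + p.1, e.2 + p.2) - v (e.1 + q.1, e.2 + q.2)) ^ 2)
        (by intro p; apply Finset.sum_nonneg; intro q _; positivity) a b N1 M h1 h2
      refine le_trans (le_of_eq ?_) h
      apply Finset.sum_congr rfl
      intro p _
      apply Finset.sum_congr rfl
      intro q _
      have : f p = v (e.1 + ((a + p.1 : ℕ) : ℤ), e.2 + ((b + p.2 : ℕ) : ℤ)) := by
        rw [hfdef]; push_cast; ring_nf
      rw [this]
    calc ∑ p ∈ A, ∑ q ∈ B, (f p - g q) ^ 2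
        ≤ ∑ p ∈ A, ∑ q ∈ range M ×ˢ range M, (f p - v (e.1 + q.1, e.2 + q.2)) ^ 2 :=
          Finset.sum_le_sum fun p _ => hstep1 p
      _ ≤ ∑ p ∈ range M ×ˢ range M, ∑ q ∈ range M ×ˢ range M,
            (v (e.1 + p.1, e.2 + p.2) - v (e.1 + q.1, e.2 + q.2)) ^ 2 := hstep2
      _ ≤ 4 * (M : ℝ) ^ 4 * ∑ p ∈ range M ×ˢ range M, D v (e.1 + p.1, e.2 + p.2) :=
          sq_pairsum v e.1 e.2 M
      _ ≤ 4 * (M : ℝ) ^ 4 * E := by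
          apply mul_le_mul_of_nonneg_left (grid_le v e.1 e.2 M hE) (by positivity)
  have hT2 : T ^ 2 ≤ ((N1 : ℝ) * N2 * (2 * (M : ℝ) ^ 2)) ^ 2 * E := by
    calc T ^ 2 ≤ ((N1 : ℝ) ^ 2 * (N2 : ℝ) ^ 2) * (4 * (M : ℝ) ^ 4 * E) := by
          refine hCS.trans ?_
          apply mul_le_mul_of_nonneg_left hsub (by positivity)
      _ = ((N1 : ℝ) * N2 * (2 * (M : ℝ) ^ 2)) ^ 2 * E := by ring
  have habs : |T| ≤ (N1 : ℝ) * N2 * (2 * (M : ℝ) ^ 2) * Real.sqrt E := by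
    rw [← Real.sqrt_sq_eq_abs]
    refine (Real.sqrt_le_sqrt hT2).trans ?_
    rw [Real.sqrt_mul (by positivity), Real.sqrt_sq (by positivity)]
  have hAvEq : Av v (e.1 + a, e.2 + b) N1 - Av v (e.1 + a', e.2 + b') N2
      = T / ((N1 : ℝ) ^ 2 * (N2 : ℝ) ^ 2) := by
    rw [Av, Av, hT]
    have hN1' : ((N1 : ℝ)) ≠ 0 := by positivity
    have hN2' : ((N2 : ℝ)) ≠ 0 := by positivity
    field_simp
  rw [hAvEq, abs_div, abs_of_pos (by positivity : (0:ℝ) < (N1 : ℝ) ^ 2 * (N2 : ℝ) ^ 2)]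
  rw [div_le_iff₀ (by positivity : (0:ℝ) < (N1 : ℝ) ^ 2 * (N2 : ℝ) ^ 2)]
  calc |T| ≤ (N1 : ℝ) * N2 * (2 * (M : ℝ) ^ 2) * Real.sqrt E := habs
    _ = 2 * (M : ℝ) ^ 2 / ((N1 : ℝ) * N2) * Real.sqrt E * ((N1 : ℝ) ^ 2 * (N2 : ℝ) ^ 2) := by
        field_simp

lemma av_step {E : ℝ} (hE : ∀ s : Finset (ℤ × ℤ), ∑ m ∈ s, D v m ≤ E) (hE0 : 0 ≤ E)
    (c : ℤ × ℤ) (N : ℕ) (hN : 0 < N) :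
    |Av v c N - Av v c (2 * N)| ≤ 4 * Real.sqrt E := by
  have h := av_diff v hE hE0 c 0 0 0 0 N (2 * N) (2 * N) hN (by omega)
    (by omega) (by omega) (by omega) (by omega)
  have hc : ((c.1 + ((0 : ℕ) : ℤ), c.2 + ((0 : ℕ) : ℤ)) : ℤ × ℤ) = c := by
    simp
  rw [hc] at h
  refine h.trans ?_
  apply mul_le_mul_of_nonneg_right _ (Real.sqrt_nonneg E)
  rw [div_le_iff₀ (by positivity)]
  push_cast
  ring_nf
  have h1 : (1 : ℝ) ≤ (N : ℝ) := by exact_mod_cast hN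
  nlinarith [sq_nonneg (N : ℝ)]

lemma av_chain {E : ℝ} (hE : ∀ s : Finset (ℤ × ℤ), ∑ m ∈ s, D v m ≤ E) (hE0 : 0 ≤ E)
    (c : ℤ × ℤ) (K : ℕ) :
    |Av v c 1 - Av v c (2 ^ K)| ≤ 4 * K * Real.sqrt E := by
  induction K with
  | zero => simp
  | succ K ih =>
      have hstep := av_step v hE hE0 c (2 ^ K) (by positivity)
      have h2 : 2 * 2 ^ K = 2 ^ (K + 1) := by rw [pow_succ]; ring
      rw [h2] at hstep
      calc |Av v c 1 - Av v c (2 ^ (K + 1))|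
          ≤ |Av v c 1 - Av v c (2 ^ K)| + |Av v c (2 ^ K) - Av v c (2 ^ (K + 1))| := by
            have := abs_sub_le (Av v c 1) (Av v c (2 ^ K)) (Av v c (2 ^ (K + 1)))
            exact this
        _ ≤ 4 * K * Real.sqrt E + 4 * Real.sqrt E := add_le_add ih hstep
        _ = 4 * (K + 1 : ℕ) * Real.sqrt E := by push_cast; ring

end DiscLog

/-- Discrete logarithmic growth bound in two dimensions: there is a universal
constant `C` such that every `v : ℤ² → ℝ` with `v(0) = 0` and
`‖Dv‖_{ℓ²} < ∞` satisfies `|v(l)| ≤ C ‖Dv‖_{ℓ²} (1 + log|l|)` for `l ≠ 0`. -/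
theorem discrete_log_bound :
    ∃ C : ℝ, 0 < C ∧ ∀ v : ℤ × ℤ → ℝ, v (0, 0) = 0 →
      Summable (fun m : ℤ × ℤ =>
        (v (m + (1, 0)) - v m) ^ 2 + (v (m + (0, 1)) - v m) ^ 2) →
      ∀ l : ℤ × ℤ, l ≠ (0, 0) →
        |v l| ≤ C * Real.sqrt (∑' m : ℤ × ℤ,
            ((v (m + (1, 0)) - v m) ^ 2 + (v (m + (0, 1)) - v m) ^ 2)) *
          (1 + Real.log (Real.sqrt ((l.1 : ℝ) ^ 2 + (l.2 : ℝ) ^ 2))) := by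
  refine ⟨16, by norm_num, ?_⟩
  intro v h0 hsum l hl
  set E : ℝ := ∑' m : ℤ × ℤ,
      ((v (m + (1, 0)) - v m) ^ 2 + (v (m + (0, 1)) - v m) ^ 2) with hEdef
  have hE : ∀ s : Finset (ℤ × ℤ), ∑ m ∈ s, DiscLog.D v m ≤ E := by
    intro s
    have h1 : ∑ m ∈ s, DiscLog.D v m
        = ∑ m ∈ s, ((v (m + (1, 0)) - v m) ^ 2 + (v (m + (0, 1)) - v m) ^ 2) := rfl
    rw [h1]
    exact Summable.sum_le_tsum s (fun m _ => by positivity) hsum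
  have hE0 : 0 ≤ E := tsum_nonneg (fun m => by positivity)
  have hsqrt0 : 0 ≤ Real.sqrt E := Real.sqrt_nonneg E
  -- the scale
  set r : ℕ := max l.1.natAbs l.2.natAbs with hrdef
  have hl' : ¬(l.1 = 0 ∧ l.2 = 0) := by
    intro h; exact hl (Prod.ext h.1 h.2)
  have hr1 : 1 ≤ r := by
    rcases not_and_or.1 hl' with h | h
    · have := Int.natAbs_pos.2 h; omega
    · have := Int.natAbs_pos.2 h; omega
  set K : ℕ := Nat.log 2 r + 1 with hKdef
  set N : ℕ := 2 ^ K with hNdef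
  have hrN : r < N := Nat.lt_pow_succ_log_self (by norm_num) r
  have hN2r : N ≤ 2 * r := by
    rw [hNdef, hKdef, pow_succ, mul_comm]
    have := Nat.pow_log_le_self 2 (by omega : r ≠ 0)
    omega
  have hNpos : 0 < N := by positivity
  -- chains
  have hchain0 : |DiscLog.Av v (0, 0) 1 - DiscLog.Av v (0, 0) N| ≤ 4 * K * Real.sqrt E :=
    DiscLog.av_chain v hE hE0 (0, 0) K
  have hchainl : |DiscLog.Av v l 1 - DiscLog.Av v l N| ≤ 4 * K * Real.sqrt E :=
    DiscLog.av_chain v hE hE0 l K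
  -- bridge
  set e1 : ℤ := min 0 l.1 with he1
  set e2 : ℤ := min 0 l.2 with he2
  set a : ℕ := (-e1).toNat with ha
  set b : ℕ := (-e2).toNat with hb
  set a' : ℕ := (l.1 - e1).toNat with ha'
  set b' : ℕ := (l.2 - e2).toNat with hb'
  have habs1 : l.1.natAbs ≤ r := le_max_left _ _
  have habs2 : l.2.natAbs ≤ r := le_max_right _ _
  have hbridge : |DiscLog.Av v (0, 0) N - DiscLog.Av v l N| ≤ 8 * Real.sqrt E := by
    have h := DiscLog.av_diff v hE hE0 (e1, e2) a b a' b' N N (2 * N) hNpos hNpos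
      (by omega) (by omega) (by omega) (by omega)
    have hc1 : (((e1, e2).1 + (a : ℤ), (e1, e2).2 + (b : ℤ)) : ℤ × ℤ) = ((0 : ℤ), (0 : ℤ)) := by
      have k1 : e1 + (a : ℤ) = 0 := by omega
      have k2 : e2 + (b : ℤ) = 0 := by omega
      exact Prod.ext k1 k2
    have hc2 : (((e1, e2).1 + (a' : ℤ), (e1, e2).2 + (b' : ℤ)) : ℤ × ℤ) = l := by
      have k1 : e1 + (a' : ℤ) = l.1 := by omega
      have k2 : e2 + (b' : ℤ) = l.2 := by omega
      exact Prod.ext k1 k2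
    rw [hc1, hc2] at h
    refine h.trans ?_
    apply mul_le_mul_of_nonneg_right _ hsqrt0
    rw [div_le_iff₀ (by positivity)]
    push_cast
    ring_nf
    nlinarith [sq_nonneg (N : ℝ), (by exact_mod_cast hNpos : (0:ℝ) < (N:ℝ))]
  -- combine
  have hAv00 : DiscLog.Av v (0, 0) 1 = 0 := by rw [DiscLog.Av_one]; exact h0
  have hAvl : DiscLog.Av v l 1 = v l := DiscLog.Av_one v l
  have hmain : |v l| ≤ (8 * K + 8) * Real.sqrt E := by
    have hvl : v l = (DiscLog.Av v l 1 - DiscLog.Av v l N)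
        - (DiscLog.Av v (0, 0) N - DiscLog.Av v l N)
        + DiscLog.Av v (0, 0) N := by
      rw [← hAvl]; ring
    have b3 : |DiscLog.Av v (0, 0) N| ≤ 4 * K * Real.sqrt E := by
      rw [hAv00, zero_sub, abs_neg] at hchain0
      exact hchain0
    have t1 := abs_add_le ((DiscLog.Av v l 1 - DiscLog.Av v l N)
        - (DiscLog.Av v (0, 0) N - DiscLog.Av v l N)) (DiscLog.Av v (0, 0) N)
    have t2 := abs_sub (DiscLog.Av v l 1 - DiscLog.Av v l N)
        (DiscLog.Av v (0, 0) N - DiscLog.Av v l N)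
    rw [hvl]
    have goal1 : (8 * (K : ℝ) + 8) * Real.sqrt E
        = 4 * K * Real.sqrt E + 8 * Real.sqrt E + 4 * K * Real.sqrt E := by ring
    rw [goal1]
    linarith [hchainl, hbridge]
  -- logarithmic bound on K
  have hrpos : (0 : ℝ) < (r : ℝ) := by exact_mod_cast hr1
  have hlogr0 : 0 ≤ Real.log r := Real.log_nonneg (by exact_mod_cast hr1)
  have hKlog : (K : ℝ) * Real.log 2 ≤ Real.log 2 + Real.log r := by
    have h2N : ((2 : ℝ)) ^ K ≤ 2 * r := by exact_mod_cast hN2r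
    have := Real.log_le_log (by positivity) h2N
    rw [Real.log_pow, Real.log_mul (by norm_num) (ne_of_gt hrpos)] at this
    exact_mod_cast this
  have hlog2 : (0.6931471803 : ℝ) < Real.log 2 := Real.log_two_gt_d9
  have hlog2pos : (0 : ℝ) < Real.log 2 := by linarith
  have hK : (K : ℝ) ≤ 1 + (3 / 2) * Real.log r := by
    have h' : (K : ℝ) ≤ (Real.log 2 + Real.log r) / Real.log 2 := by
      rw [le_div_iff₀ hlog2pos]; exact hKlog
    rw [add_div, div_self (ne_of_gt hlog2pos)] at h'
    refine h'.trans ?_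
    have : Real.log r / Real.log 2 ≤ (3 / 2) * Real.log r := by
      rw [div_le_iff₀ hlog2pos]
      nlinarith
    linarith
  set L : ℝ := Real.sqrt ((l.1 : ℝ) ^ 2 + (l.2 : ℝ) ^ 2) with hLdef
  have hrL : (r : ℝ) ≤ L := by
    have c1 : ((l.1.natAbs : ℝ)) ^ 2 = (l.1 : ℝ) ^ 2 := by
      rw [Nat.cast_natAbs]; push_cast; exact sq_abs _
    have c2 : ((l.2.natAbs : ℝ)) ^ 2 = (l.2 : ℝ) ^ 2 := by
      rw [Nat.cast_natAbs]; push_cast; exact sq_abs _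
    have hsq : ((r : ℝ)) ^ 2 ≤ (l.1 : ℝ) ^ 2 + (l.2 : ℝ) ^ 2 := by
      rcases max_cases l.1.natAbs l.2.natAbs with ⟨h1, _⟩ | ⟨h1, _⟩ <;>
        rw [hrdef, h1] <;> nlinarith [sq_nonneg ((l.1 : ℝ)), sq_nonneg ((l.2 : ℝ))]
    have := Real.sqrt_le_sqrt hsq
    rwa [Real.sqrt_sq (le_of_lt hrpos)] at this
  have hlogrL : Real.log r ≤ Real.log L := Real.log_le_log hrpos hrL
  have hfinal : (8 * (K : ℝ) + 8) ≤ 16 * (1 + Real.log L) := by linarith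
  refine hmain.trans ?_
  calc (8 * (K : ℝ) + 8) * Real.sqrt E ≤ 16 * (1 + Real.log L) * Real.sqrt E :=
        mul_le_mul_of_nonneg_right hfinal hsqrt0
    _ = 16 * Real.sqrt E * (1 + Real.log L) := by ring
end
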